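/- The leader's objective function ψ(x) := max_{y ∈ I_Y(x)} β^T y is submodular on {0,1}^n: for all x', x'' ∈ {0,1}^n with x' ≤ x'' (componentwise) and every index i ∈ {1,…,n} with x'_i = x''_i = 0, one has ψ(x' + e_i) − ψ(x') ≥ ψ(x'' + e_i) − ψ(x''), where e_i denotes the i-th unit vector. -/
import Mathlib


/-- The leader's objective `ψ(x)`: the follower's optimal value, i.e. the maximum of
`βᵀy` over binary `y ≤ 1 - x` satisfying `∑_{i ∈ F_k} y_i ≤ f_k` for all `k`. -/
noncomputable def psi (n kf : ℕ) (F : Fin kf → Finset ℕ) (f : Fin kf → ℕ)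
    (β : ℕ → ℝ) (x : ℕ → ℝ) : ℝ :=
  sSup {v : ℝ | ∃ y : ℕ → ℝ,
    (∀ i, y i = 0 ∨ y i = 1) ∧
    (∀ i, y i ≤ 1 - x i) ∧
    (∀ k : Fin kf, ∑ i ∈ F k, y i ≤ (f k : ℝ)) ∧
    v = ∑ i ∈ Finset.Icc 1 n, β i * y i}

namespace PsiAux

/-- The feasible-value set of the follower's problem. -/
def PSet (n kf : ℕ) (F : Fin kf → Finset ℕ) (f : Fin kf → ℕ)
    (β : ℕ → ℝ) (x : ℕ → ℝ) : Set ℝ :=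
  {v : ℝ | ∃ y : ℕ → ℝ,
    (∀ i, y i = 0 ∨ y i = 1) ∧
    (∀ i, y i ≤ 1 - x i) ∧
    (∀ k : Fin kf, ∑ i ∈ F k, y i ≤ (f k : ℝ)) ∧
    v = ∑ i ∈ Finset.Icc 1 n, β i * y i}

lemma psi_eq (n kf : ℕ) (F : Fin kf → Finset ℕ) (f : Fin kf → ℕ)
    (β : ℕ → ℝ) (x : ℕ → ℝ) :
    psi n kf F f β x = sSup (PSet n kf F f β x) := rfl

lemma PSet_finite (n kf : ℕ) (F : Fin kf → Finset ℕ) (f : Fin kf → ℕ)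
    (β : ℕ → ℝ) (x : ℕ → ℝ) : (PSet n kf F f β x).Finite := by
  classical
  apply Set.Finite.subset (Set.finite_range
    (fun S : Finset.Icc 1 n |>.powerset => ∑ t ∈ (S : Finset ℕ), β t))
  rintro v ⟨y, hy01, -, -, hv⟩
  refine ⟨⟨(Finset.Icc 1 n).filter (fun t => y t = 1), by simp⟩, ?_⟩
  simp only
  rw [hv, Finset.sum_filter]
  apply Finset.sum_congr rfl
  intro t _
  rcases hy01 t with h | h <;> simp [h]

lemma PSet_nonempty (n kf : ℕ) (F : Fin kf → Finset ℕ) (f : Fin kf → ℕ)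
    (β : ℕ → ℝ) (x : ℕ → ℝ) (hx : ∀ t, x t ≤ 1) :
    (0 : ℝ) ∈ PSet n kf F f β x := by
  refine ⟨fun _ => 0, fun _ => Or.inl rfl, fun t => by show (0:ℝ) ≤ 1 - x t; linarith [hx t], fun k => by simp, by simp⟩

lemma le_psi (n kf : ℕ) (F : Fin kf → Finset ℕ) (f : Fin kf → ℕ)
    (β : ℕ → ℝ) (x : ℕ → ℝ) {v : ℝ} (hv : v ∈ PSet n kf F f β x) :
    v ≤ psi n kf F f β x :=
  le_csSup (PSet_finite n kf F f β x).bddAbove hv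

lemma psi_mem (n kf : ℕ) (F : Fin kf → Finset ℕ) (f : Fin kf → ℕ)
    (β : ℕ → ℝ) (x : ℕ → ℝ) (hx : ∀ t, x t ≤ 1) :
    psi n kf F f β x ∈ PSet n kf F f β x :=
  (Set.nonempty_of_mem (PSet_nonempty n kf F f β x hx)).csSup_mem
    (PSet_finite n kf F f β x)

lemma upd_mul (β y : ℕ → ℝ) (i : ℕ) (c : ℝ) (t : ℕ) :
    β t * Function.update y i c t = Function.update (fun s => β s * y s) i (β i * c) t := by
  by_cases h : t = i
  · subst h; simp
  · simp [h]

lemma sum_update_mem (A : Finset ℕ) (y : ℕ → ℝ) (i : ℕ) (c : ℝ) (hi : i ∈ A) :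
    ∑ t ∈ A, Function.update y i c t = ∑ t ∈ A, y t + (c - y i) := by
  rw [Finset.sum_update_of_mem hi]
  have h := Finset.sum_eq_sum_sdiff_singleton_add hi y
  linarith

lemma sum_update_notMem (A : Finset ℕ) (y : ℕ → ℝ) (i : ℕ) (c : ℝ) (hi : i ∉ A) :
    ∑ t ∈ A, Function.update y i c t = ∑ t ∈ A, y t :=
  Finset.sum_congr rfl fun t ht => Function.update_of_ne (by rintro rfl; exact hi ht) _ _

lemma sum_binary_eq_card (A : Finset ℕ) (y : ℕ → ℝ) (hy : ∀ t, y t = 0 ∨ y t = 1) :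
    ∑ t ∈ A, y t = ((A.filter (fun t => y t = 1)).card : ℝ) := by
  classical
  rw [← Finset.sum_boole]
  apply Finset.sum_congr rfl
  intro t _
  rcases hy t with h | h <;> simp [h]

end PsiAux

open PsiAux in
/-- Proposition 1(ii): `ψ` is submodular on `{0,1}^n`:
for `x' ≤ x''` and an index `i ∈ {1,…,n}` with `x'_i = x''_i = 0`,
`ψ(x' + e_i) - ψ(x') ≥ ψ(x'' + e_i) - ψ(x'')`. -/
theorem psi_submodular (n kf : ℕ) (β : ℕ → ℝ)
    (hβ : ∀ i, 0 ≤ β i)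
    (F : Fin kf → Finset ℕ) (f : Fin kf → ℕ)
    (hFsub : ∀ k, F k ⊆ Finset.Icc 1 n)
    (hFdisj : ∀ k k', k ≠ k' → Disjoint (F k) (F k'))
    (hFcover : ∀ i ∈ Finset.Icc 1 n, ∃ k, i ∈ F k)
    (x' x'' : ℕ → ℝ)
    (hx' : ∀ i, x' i = 0 ∨ x' i = 1) (hx'' : ∀ i, x'' i = 0 ∨ x'' i = 1)
    (hle : ∀ i, x' i ≤ x'' i)
    (i : ℕ) (hi : i ∈ Finset.Icc 1 n) (hi' : x' i = 0) (hi'' : x'' i = 0) :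
    psi n kf F f β (fun t => x'' t + (if t = i then 1 else 0))
      - psi n kf F f β x''
    ≤ psi n kf F f β (fun t => x' t + (if t = i then 1 else 0))
      - psi n kf F f β x' := by
  classical
  -- basic bounds on x', x''
  have hx'le : ∀ t, x' t ≤ 1 := fun t => by rcases hx' t with h | h <;> simp [h]
  have hx''le : ∀ t, x'' t ≤ 1 := fun t => by rcases hx'' t with h | h <;> simp [h]
  have hx'0 : ∀ t, 0 ≤ x' t := fun t => by rcases hx' t with h | h <;> simp [h]
  have hx''0 : ∀ t, 0 ≤ x'' t := fun t => by rcases hx'' t with h | h <;> simp [h]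
  set x1e : ℕ → ℝ := fun t => x' t + (if t = i then 1 else 0) with hx1e
  set x2e : ℕ → ℝ := fun t => x'' t + (if t = i then 1 else 0) with hx2e
  have hx1e_le : ∀ t, x1e t ≤ 1 := by
    intro t; simp only [hx1e]
    by_cases h : t = i <;> simp [h, hi', hx'le t]
  have hx2e_le : ∀ t, x2e t ≤ 1 := by
    intro t; simp only [hx2e]
    by_cases h : t = i <;> simp [h, hi'', hx''le t]
  -- optimal y for x' and optimal z for x'' + e_i
  obtain ⟨y, hy01, hyfeas, hypart, hyval⟩ := psi_mem n kf F f β x' hx'le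
  obtain ⟨z, hz01, hzfeas, hzpart, hzval⟩ := psi_mem n kf F f β x2e hx2e_le
  -- z i = 0
  have hzi : z i = 0 := by
    have := hzfeas i
    simp only [hx2e, hi''] at this
    rcases hz01 i with h | h
    · exact h
    · simp [h] at this; linarith
  -- it suffices to exhibit feasible y' (for x'+e) and z' (for x'') with matching total value
  suffices h : psi n kf F f β x2e + psi n kf F f β x' ≤ psi n kf F f β x1e + psi n kf F f β x'' by
    linarith
  by_cases hyi : y i = 1
  · -- y uses i; exchange argument
    obtain ⟨k, hik⟩ := hFcover i hi
    by_cases hslack : ∑ t ∈ F k, z t + 1 ≤ (f k : ℝ)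
    · -- slack: move i from y to z
      have hy' : (∑ t ∈ Finset.Icc 1 n, β t * Function.update y i 0 t)
          ∈ PSet n kf F f β x1e := by
        refine ⟨Function.update y i 0, ?_, ?_, ?_, rfl⟩
        · intro t; by_cases h : t = i
          · subst h; simp
          · simp [Function.update_of_ne h]; exact hy01 t
        · intro t; by_cases h : t = i
          · subst h; simp [hx1e, hi']
          · simp [Function.update_of_ne h, hx1e, h]; exact hyfeas t
        · intro k'
          by_cases hk : i ∈ F k'
          · rw [sum_update_mem _ _ _ _ hk]
            have := hypart k'
            have h0 : (0:ℝ) ≤ y i := by rcases hy01 i with h | h <;> simp [h]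
            linarith
          · rw [sum_update_notMem _ _ _ _ hk]; exact hypart k'
      have hz' : (∑ t ∈ Finset.Icc 1 n, β t * Function.update z i 1 t)
          ∈ PSet n kf F f β x'' := by
        refine ⟨Function.update z i 1, ?_, ?_, ?_, rfl⟩
        · intro t; by_cases h : t = i
          · subst h; simp
          · simp [Function.update_of_ne h]; exact hz01 t
        · intro t; by_cases h : t = i
          · subst h; simp [hi'']
          · simp only [Function.update_of_ne h]
            have := hzfeas t
            have hpos : (0:ℝ) ≤ if t = i then 1 else 0 := by positivity
            simp only [hx2e] at this
            linarith
        · intro k'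
          by_cases hk : i ∈ F k'
          · have hkk : k' = k := by
              by_contra hne
              exact Finset.disjoint_left.mp (hFdisj k' k hne) hk hik
            subst hkk
            rw [sum_update_mem _ _ _ _ hk, hzi]
            linarith
          · rw [sum_update_notMem _ _ _ _ hk]; exact hzpart k'
      have hub1 := le_psi n kf F f β x1e hy'
      have hub2 := le_psi n kf F f β x'' hz'
      -- values
      have hv1 : ∑ t ∈ Finset.Icc 1 n, β t * Function.update y i 0 t
          = (∑ t ∈ Finset.Icc 1 n, β t * y t) - β i := by
        rw [Finset.sum_congr rfl (fun t _ => upd_mul β y i 0 t),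
          sum_update_mem _ _ _ _ hi, hyi]
        ring
      have hv2 : ∑ t ∈ Finset.Icc 1 n, β t * Function.update z i 1 t
          = (∑ t ∈ Finset.Icc 1 n, β t * z t) + β i := by
        rw [Finset.sum_congr rfl (fun t _ => upd_mul β z i 1 t),
          sum_update_mem _ _ _ _ hi, hzi]
        ring
      rw [hv1] at hub1
      rw [hv2] at hub2
      rw [hzval, hyval] at *
      linarith
    · -- no slack: the k-part of z is full; swap an element
      have hzcard : ((F k).filter (fun t => z t = 1)).card = f k := by
        have hsum := sum_binary_eq_card (F k) z hz01
        have h1 := hzpart k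
        rw [hsum] at h1 hslack
        have h2 : ¬ (((F k).filter (fun t => z t = 1)).card + 1 ≤ f k) := by
          intro hc
          apply hslack
          push_cast
          exact_mod_cast (by exact_mod_cast hc : (((F k).filter (fun t => z t = 1)).card + 1 : ℝ) ≤ f k)
        have h1' : ((F k).filter (fun t => z t = 1)).card ≤ f k := by exact_mod_cast h1
        omega
      have hycard : ((F k).filter (fun t => y t = 1)).card ≤ f k := by
        have hsum := sum_binary_eq_card (F k) y hy01
        have h1 := hypart k
        rw [hsum] at h1
        exact_mod_cast h1
      -- find j ∈ F k with z j = 1, y j = 0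
      have hexj : ∃ j ∈ (F k).filter (fun t => z t = 1), y j ≠ 1 := by
        by_contra hc
        push_neg at hc
        have hsub : (F k).filter (fun t => z t = 1) ⊆ (F k).filter (fun t => y t = 1) := by
          intro t ht
          rw [Finset.mem_filter] at ht ⊢
          exact ⟨ht.1, hc t (Finset.mem_filter.mpr ht)⟩
        have hss : (F k).filter (fun t => z t = 1) ⊂ (F k).filter (fun t => y t = 1) := by
          refine ⟨hsub, fun h => ?_⟩
          have himem : i ∈ (F k).filter (fun t => y t = 1) := Finset.mem_filter.mpr ⟨hik, hyi⟩
          have := h himem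
          rw [Finset.mem_filter] at this
          rw [this.2] at hzi
          norm_num at hzi
        have := Finset.card_lt_card hss
        omega
      obtain ⟨j, hjmem, hyj1⟩ := hexj
      rw [Finset.mem_filter] at hjmem
      obtain ⟨hjk, hzj⟩ := hjmem
      have hyj : y j = 0 := (hy01 j).resolve_right hyj1
      have hji : j ≠ i := fun h => by rw [h, hzi] at hzj; norm_num at hzj
      have hjIcc : j ∈ Finset.Icc 1 n := hFsub k hjk
      -- x'' j = 0 hence x' j = 0
      have hx''j : x'' j = 0 := by
        have := hzfeas j
        simp only [hx2e, if_neg hji] at this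
        rcases hx'' j with h | h
        · exact h
        · rw [h, hzj] at this; norm_num at this
      have hx'j : x' j = 0 := le_antisymm (by rw [← hx''j]; exact hle j) (hx'0 j)
      -- y' = y - e_i + e_j, feasible for x' + e_i
      set y' := Function.update (Function.update y i 0) j 1 with hy'def
      set z' := Function.update (Function.update z j 0) i 1 with hz'def
      have hy'mem : (∑ t ∈ Finset.Icc 1 n, β t * y' t) ∈ PSet n kf F f β x1e := by
        refine ⟨y', ?_, ?_, ?_, rfl⟩
        · intro t
          by_cases h1 : t = j
          · subst h1; simp [hy'def]
          · by_cases h2 : t = i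
            · subst h2; simp [hy'def, Function.update_of_ne (Ne.symm hji)]
            · simp [hy'def, Function.update_of_ne h1, Function.update_of_ne h2]
              exact hy01 t
        · intro t
          by_cases h1 : t = j
          · subst h1
            simp [hy'def, hx1e, if_neg hji, hx'j]
          · by_cases h2 : t = i
            · subst h2
              simp [hy'def, Function.update_of_ne (Ne.symm hji), hx1e, hi']
            · simp only [hy'def, Function.update_of_ne h1, Function.update_of_ne h2,
                hx1e, if_neg h2, add_zero]
              exact hyfeas t
        · intro k'
          by_cases hk : k' = k
          · subst hk
            rw [hy'def, sum_update_mem _ _ _ _ hjk,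
              sum_update_mem _ _ _ _ hik,
              Function.update_of_ne hji, hyi, hyj]
            have := hypart k'
            linarith
          · have hikk : i ∉ F k' := fun h => Finset.disjoint_left.mp (hFdisj k' k hk) h hik
            have hjkk : j ∉ F k' := fun h => Finset.disjoint_left.mp (hFdisj k' k hk) h hjk
            rw [hy'def, sum_update_notMem _ _ _ _ hjkk, sum_update_notMem _ _ _ _ hikk]
            exact hypart k'
      have hz'mem : (∑ t ∈ Finset.Icc 1 n, β t * z' t) ∈ PSet n kf F f β x'' := by
        refine ⟨z', ?_, ?_, ?_, rfl⟩
        · intro t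
          by_cases h1 : t = i
          · subst h1; simp [hz'def]
          · by_cases h2 : t = j
            · subst h2; simp [hz'def, Function.update_of_ne hji]
            · simp [hz'def, Function.update_of_ne h1, Function.update_of_ne h2]
              exact hz01 t
        · intro t
          by_cases h1 : t = i
          · subst h1; simp [hz'def, hi'']
          · by_cases h2 : t = j
            · subst h2
              simp [hz'def, Function.update_of_ne hji, hx''j]
            · simp only [hz'def, Function.update_of_ne h1, Function.update_of_ne h2]
              have := hzfeas t
              have hpos : (0:ℝ) ≤ if t = i then 1 else 0 := by positivity
              simp only [hx2e] at this
              linarith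
        · intro k'
          by_cases hk : k' = k
          · subst hk
            rw [hz'def, sum_update_mem _ _ _ _ hik,
              sum_update_mem _ _ _ _ hjk,
              Function.update_of_ne (Ne.symm hji), hzi, hzj]
            have := hzpart k'
            linarith
          · have hikk : i ∉ F k' := fun h => Finset.disjoint_left.mp (hFdisj k' k hk) h hik
            have hjkk : j ∉ F k' := fun h => Finset.disjoint_left.mp (hFdisj k' k hk) h hjk
            rw [hz'def, sum_update_notMem _ _ _ _ hikk, sum_update_notMem _ _ _ _ hjkk]
            exact hzpart k'
      have hub1 := le_psi n kf F f β x1e hy'mem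
      have hub2 := le_psi n kf F f β x'' hz'mem
      have hv1 : ∑ t ∈ Finset.Icc 1 n, β t * y' t
          = (∑ t ∈ Finset.Icc 1 n, β t * y t) - β i + β j := by
        rw [hy'def,
          Finset.sum_congr rfl (fun t _ => upd_mul β (Function.update y i 0) j 1 t),
          sum_update_mem _ _ _ _ hjIcc,
          Finset.sum_congr rfl (fun t _ => upd_mul β y i 0 t),
          sum_update_mem _ _ _ _ hi]
        have : Function.update y i 0 j = y j := Function.update_of_ne hji _ _
        rw [this, hyi, hyj]
        ring
      have hv2 : ∑ t ∈ Finset.Icc 1 n, β t * z' t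
          = (∑ t ∈ Finset.Icc 1 n, β t * z t) - β j + β i := by
        rw [hz'def,
          Finset.sum_congr rfl (fun t _ => upd_mul β (Function.update z j 0) i 1 t),
          sum_update_mem _ _ _ _ hi,
          Finset.sum_congr rfl (fun t _ => upd_mul β z j 0 t),
          sum_update_mem _ _ _ _ hjIcc]
        have : Function.update z j 0 i = z i := Function.update_of_ne (Ne.symm hji) _ _
        rw [this, hzi, hzj]
        ring
      rw [hv1] at hub1
      rw [hv2] at hub2
      rw [hzval, hyval] at *
      linarith
  · -- y i = 0 : y itself is feasible for x' + e_i, z is feasible for x''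
    have hyi0 : y i = 0 := (hy01 i).resolve_right hyi
    have hy'mem : (∑ t ∈ Finset.Icc 1 n, β t * y t) ∈ PSet n kf F f β x1e := by
      refine ⟨y, hy01, ?_, hypart, rfl⟩
      intro t
      by_cases h : t = i
      · subst h; simp [hx1e, hi', hyi0]
      · simp only [hx1e, if_neg h, add_zero]; exact hyfeas t
    have hz'mem : (∑ t ∈ Finset.Icc 1 n, β t * z t) ∈ PSet n kf F f β x'' := by
      refine ⟨z, hz01, ?_, hzpart, rfl⟩
      intro t
      have := hzfeas t
      have hpos : (0:ℝ) ≤ if t = i then 1 else 0 := by positivity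
      simp only [hx2e] at this
      linarith
    have hub1 := le_psi n kf F f β x1e hy'mem
    have hub2 := le_psi n kf F f β x'' hz'mem
    rw [hzval, hyval] at *
    linarith
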